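/- Let $D$ be a finite set with $|D|\geq 2$, $p_0$ a strictly positive probability mass function, $c>1$ with $c < \min_s 1/(1-p_0(s))$, $d = c-1$, and $u : D \to \mathbb{R}$ nonconstant. Define $\underline{p}(s) = p_0(s)\left(1 + \sqrt{d}\,\frac{\mathbb{E}_0[u] - u(s)}{\mathbb{S}_0[u]}\right)$. Then $\underline{p}$ is a probability mass function (i.e., $\underline{p}(s) > 0$ for all $s$ and $\sum_s \underline{p}(s) = 1$), it satisfies the divergence constraint $\sum_s \underline{p}(s)^2 / p_0(s) = c$, and $\sum_s \underline{p}(s) u(s) = \mathbb{E}_0[u] - \sqrt{d}\, \mathbb{S}_0[u]$. -/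

import Mathlib

set_option maxHeartbeats 1000000

/-- Expectation of `u` under the probability mass function `p`. -/
noncomputable def expct {D : Type*} [Fintype D] (p u : D → ℝ) : ℝ := ∑ s, p s * u s

/-- Variance of `u` under the probability mass function `p`. -/
noncomputable def var0 {D : Type*} [Fintype D] (p u : D → ℝ) : ℝ :=
  ∑ s, p s * (u s - expct p u) ^ 2

/-- Standard deviation of `u` under the probability mass function `p`. -/
noncomputable def sdev {D : Type*} [Fintype D] (p u : D → ℝ) : ℝ :=
  Real.sqrt (var0 p u)

theorem stmt_4 {D : Type*} [Fintype D]
    (hD : 2 ≤ Fintype.card D)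
    (p0 : D → ℝ) (hpos : ∀ s, 0 < p0 s) (hsum : ∑ s, p0 s = 1)
    (c : ℝ) (hc1 : 1 < c) (hc : ∀ s, c < 1 / (1 - p0 s))
    (d : ℝ) (hd : d = c - 1)
    (u : D → ℝ) (hu : ∃ s t, u s ≠ u t)
    (pmin : D → ℝ)
    (hpmin : ∀ s, pmin s =
      p0 s * (1 + Real.sqrt d * (expct p0 u - u s) / sdev p0 u)) :
    (∀ s, 0 < pmin s) ∧ (∑ s, pmin s = 1) ∧
      (∑ s, (pmin s) ^ 2 / p0 s = c) ∧
      (∑ s, pmin s * u s = expct p0 u - Real.sqrt d * sdev p0 u) := by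
  classical
  set E := expct p0 u with hE
  set V := var0 p0 u with hVdef
  set S := sdev p0 u with hSdef
  set t := Real.sqrt d with htdef
  clear_value E V S t
  have hd0 : 0 < d := by rw [hd]; linarith
  have h0 : ∑ s, p0 s * (E - u s) = 0 := by
    have h1 : ∑ s, p0 s * (E - u s) = E * (∑ s, p0 s) - ∑ s, p0 s * u s := by
      rw [Finset.mul_sum, ← Finset.sum_sub_distrib]
      exact Finset.sum_congr rfl (fun s _ => by ring)
    rw [h1, hsum, mul_one, hE]
    rw [expct, sub_self]
  have hVsum : ∑ s, p0 s * (E - u s) ^ 2 = V := by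
    rw [hVdef, var0]
    exact Finset.sum_congr rfl (fun s _ => by rw [hE]; ring)
  have hVpos : 0 < V := by
    obtain ⟨a, b, hab⟩ := hu
    have hex : ∃ r, u r ≠ E := by
      by_contra h
      push_neg at h
      exact hab ((h a).trans (h b).symm)
    obtain ⟨r, hr⟩ := hex
    rw [hVdef, var0]
    apply Finset.sum_pos' (fun i _ => mul_nonneg (hpos i).le (sq_nonneg _))
    refine ⟨r, Finset.mem_univ r, mul_pos (hpos r) ?_⟩
    have : u r - expct p0 u ≠ 0 := sub_ne_zero.mpr (by rw [← hE]; exact hr)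
    positivity
  have hSV : S = Real.sqrt V := by rw [hSdef, sdev, hVdef]
  have hSpos : 0 < S := by rw [hSV]; exact Real.sqrt_pos.mpr hVpos
  have hS2 : S ^ 2 = V := by rw [hSV]; exact Real.sq_sqrt hVpos.le
  have ht2 : t ^ 2 = d := by rw [htdef]; exact Real.sq_sqrt hd0.le
  have key : ∀ s, d * (u s - E) ^ 2 < V := by
    intro s
    have hp1 : p0 s < 1 := by
      obtain ⟨b, hb⟩ := Fintype.exists_ne_of_one_lt_card (by omega) s
      calc p0 s < ∑ r, p0 r :=
            Finset.single_lt_sum hb (Finset.mem_univ s) (Finset.mem_univ b) (hpos b)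
              (fun k _ _ => (hpos k).le)
        _ = 1 := hsum
    have h1p : 0 < 1 - p0 s := by linarith
    have hsub : ∑ r ∈ Finset.univ.erase s, p0 r * (u s - u r) = u s - E := by
      have h2 : ∑ r, p0 r * (u s - u r) = u s * (∑ r, p0 r) - ∑ r, p0 r * u r := by
        rw [Finset.mul_sum, ← Finset.sum_sub_distrib]
        exact Finset.sum_congr rfl (fun r _ => by ring)
      rw [Finset.sum_erase_eq_sub (Finset.mem_univ s), h2, hsum, mul_one, hE, expct]
      ring
    have hA : ∑ r ∈ Finset.univ.erase s, p0 r = 1 - p0 s := by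
      rw [Finset.sum_erase_eq_sub (Finset.mem_univ s), hsum]
    have hBfull : ∑ r, p0 r * (u s - u r) ^ 2 = (u s - E) ^ 2 + V := by
      have h3 : ∑ r, p0 r * (u s - u r) ^ 2
          = (u s - E) ^ 2 * (∑ r, p0 r) + 2 * (u s - E) * (∑ r, p0 r * (E - u r))
            + ∑ r, p0 r * (E - u r) ^ 2 := by
        rw [Finset.mul_sum, Finset.mul_sum, ← Finset.sum_add_distrib, ← Finset.sum_add_distrib]
        exact Finset.sum_congr rfl (fun r _ => by ring)
      rw [h3, hsum, h0, hVsum]; ring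
    have hB : ∑ r ∈ Finset.univ.erase s, p0 r * (u s - u r) ^ 2 = (u s - E) ^ 2 + V := by
      rw [Finset.sum_erase_eq_sub (Finset.mem_univ s), hBfull]
      ring
    have hcs := Finset.sum_mul_sq_le_sq_mul_sq (Finset.univ.erase s)
      (fun r => Real.sqrt (p0 r)) (fun r => Real.sqrt (p0 r) * (u s - u r))
    have e1 : ∑ r ∈ Finset.univ.erase s,
        Real.sqrt (p0 r) * (Real.sqrt (p0 r) * (u s - u r))
        = ∑ r ∈ Finset.univ.erase s, p0 r * (u s - u r) := by
      refine Finset.sum_congr rfl (fun r _ => ?_)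
      rw [← mul_assoc, Real.mul_self_sqrt (hpos r).le]
    have e2 : ∑ r ∈ Finset.univ.erase s, Real.sqrt (p0 r) ^ 2
        = ∑ r ∈ Finset.univ.erase s, p0 r :=
      Finset.sum_congr rfl (fun r _ => Real.sq_sqrt (hpos r).le)
    have e3 : ∑ r ∈ Finset.univ.erase s, (Real.sqrt (p0 r) * (u s - u r)) ^ 2
        = ∑ r ∈ Finset.univ.erase s, p0 r * (u s - u r) ^ 2 := by
      refine Finset.sum_congr rfl (fun r _ => ?_)
      rw [mul_pow, Real.sq_sqrt (hpos r).le]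
    rw [e1, e2, e3, hA, hB, hsub] at hcs
    -- hcs : (u s - E)^2 ≤ (1 - p0 s) * ((u s - E)^2 + V)
    have hCS : p0 s * (u s - E) ^ 2 ≤ (1 - p0 s) * V := by nlinarith
    have hcd : c * (1 - p0 s) < 1 := by
      have := hc s
      exact (lt_div_iff₀ h1p).mp this
    have hdp : d * (1 - p0 s) < p0 s := by rw [hd]; nlinarith
    nlinarith [mul_le_mul_of_nonneg_left hCS hd0.le, mul_lt_mul_of_pos_right hdp hVpos,
      hpos s, mul_pos (hpos s) hVpos]
  have hposmin : ∀ s, 0 < pmin s := by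
    intro s
    have hk := key s
    have h1 : t ^ 2 * (E - u s) ^ 2 < S ^ 2 := by rw [ht2, hS2]; nlinarith [hk]
    have habs : -S < t * (E - u s) := by nlinarith [sq_nonneg (t * (E - u s) + S), h1, hSpos]
    rw [hpmin s]
    have hq : -1 < t * (E - u s) / S := by
      rw [lt_div_iff₀ hSpos]; linarith
    have : (0:ℝ) < 1 + t * (E - u s) / S := by linarith
    exact mul_pos (hpos s) this
  have hsum1 : ∑ s, pmin s = 1 := by
    have hstep : ∀ s, pmin s = p0 s + (t / S) * (p0 s * (E - u s)) := fun s => by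
      rw [hpmin s]; ring
    simp only [hstep]
    rw [Finset.sum_add_distrib, ← Finset.mul_sum, h0, hsum]; ring
  have hEval : (∑ s, p0 s * u s) = E := by rw [hE, expct]
  have hsum3 : ∑ s, pmin s ^ 2 / p0 s = c := by
    have hstep : ∀ s, pmin s ^ 2 / p0 s
        = p0 s + (2 * t / S) * (p0 s * (E - u s)) + (t ^ 2 / S ^ 2) * (p0 s * (E - u s) ^ 2) := by
      intro s
      rw [hpmin s]
      have hp := (hpos s).ne'
      have hS := hSpos.ne'
      field_simp
      ring
    simp only [hstep]
    rw [Finset.sum_add_distrib, Finset.sum_add_distrib, ← Finset.mul_sum, ← Finset.mul_sum,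
      h0, hVsum, hsum, ht2, hS2]
    field_simp
    rw [hd]; ring
  have hsum4 : ∑ s, pmin s * u s = E - t * S := by
    have hstep : ∀ s, pmin s * u s
        = p0 s * u s + (t / S) * (E * (p0 s * (E - u s)) - p0 s * (E - u s) ^ 2) := fun s => by
      rw [hpmin s]; ring
    simp only [hstep]
    rw [Finset.sum_add_distrib, ← Finset.mul_sum, Finset.sum_sub_distrib, ← Finset.mul_sum,
      h0, hVsum, hEval, ← hS2]
    field_simp
    ring
  exact ⟨hposmin, hsum1, hsum3, hsum4⟩
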